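/- Let A, B be strings over an alphabet Σ with edit distance ED(A,B) ≤ k. Then A and B can each be partitioned into 2k+1 (possibly empty) contiguous intervals I₁^A,…,I_{2k+1}^A and I₁^B,…,I_{2k+1}^B, together with a partial monotone matching π between the interval indices, such that every unmatched interval has length at most 1, and for every matched pair (i, π(i)) the substring of B on interval I_{π(i)}^B equals the substring of A on interval I_i^A, where the starting positions of these two intervals differ by at most k. -/

import Mathlib

open Finset

/-- Cost structure for edit distance (the former Mathlib `Levenshtein.Cost`). -/
structure Levenshtein.Cost (α β δ : Type*) where
  delete : α → δ
  insert : β → δ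
  substitute : α → β → δ

/-- Default unit costs (the former Mathlib `Levenshtein.defaultCost`). -/
def Levenshtein.defaultCost {α : Type*} [DecidableEq α] : Levenshtein.Cost α α ℕ where
  delete _ := 1
  insert _ := 1
  substitute a b := if a = b then 0 else 1

/-- Weighted Levenshtein distance (the former Mathlib `levenshtein`), by its recurrence. -/
def levenshtein {α β δ : Type*} [AddZeroClass δ] [Min δ] (C : Levenshtein.Cost α β δ) :
    List α → List β → δ
  | [], ys => (ys.map C.insert).foldr (· + ·) 0
  | xs, [] => (xs.map C.delete).foldr (· + ·) 0
  | x :: xs, y :: ys =>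
    min (C.delete x + levenshtein C xs (y :: ys))
      (min (C.insert y + levenshtein C (x :: xs) ys) (C.substitute x y + levenshtein C xs ys))

/-- Edit distance (Levenshtein distance with unit costs). -/
def ED {α : Type*} [DecidableEq α] (A B : List α) : ℕ :=
  levenshtein Levenshtein.defaultCost A B

namespace DecompAux
variable {α β : Type*}

def EDX [DecidableEq α] (A B : List α) : ℕ :=
  levenshtein Levenshtein.defaultCost A B


def pcost (l : List (List α × List α × Bool)) : ℕ :=
  (l.filter (fun p => !p.2.2)).length

def hb : List (List α × List α × Bool) → ℕ
  | [] => 0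
  | p :: _ => if p.2.2 then 1 else 0

lemma pcost_cons (p : List α × List α × Bool) (l) :
    pcost (p :: l) = (if p.2.2 then 0 else 1) + pcost l := by
  simp only [pcost, List.filter_cons]
  cases h : p.2.2 <;> simp [h, Nat.add_comm]

def Good (p : List α × List α × Bool) : Prop :=
  (p.2.2 = true → p.1 = p.2.1) ∧ (p.2.2 = false → p.1.length ≤ 1 ∧ p.2.1.length ≤ 1)

lemma sum_univ_getD (g : β → ℕ) (d : β) (l : List β) (n : ℕ) (h : l.length = n) :
    ∑ i : Fin n, g (l.getD i d) = (l.map g).sum := by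
  subst h
  induction l with
  | nil => simp
  | cons x t ih =>
    rw [List.length_cons, Fin.sum_univ_succ]
    simp [List.getD_cons_succ, ih]

lemma sum_range_getD (g : β → ℕ) (d : β) (l : List β) (m : ℕ) (hm : m ≤ l.length) :
    ∑ j ∈ Finset.range m, g (l.getD j d) = ((l.take m).map g).sum := by
  induction m with
  | zero => simp
  | succ m ih =>
    have hlt : m < l.length := by omega
    rw [Finset.sum_range_succ, ih (by omega), List.map_take, List.map_take,
      List.sum_take_succ _ m (by simpa using hlt), List.getElem_map,
      List.getD_eq_getElem (hn := hlt)]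

lemma sum_filter_lt_getD (g : β → ℕ) (d : β) (l : List β) (n : ℕ) (h : l.length = n) (i : Fin n) :
    ∑ t ∈ univ.filter (· < i), g (l.getD t d) = ((l.take i).map g).sum := by
  have h1 : univ.filter (· < i) = Finset.Iio i := by ext t; simp
  rw [h1, ← sum_range_getD g d l i (by omega), ← Nat.Iio_eq_range,
    ← Fin.map_valEmbedding_Iio, Finset.sum_map]
  rfl

lemma flatten_extract (L : List (List α)) : ∀ (m : ℕ), m < L.length →
    ((L.flatten.drop (((L.take m).map List.length).sum)).take (L.getD m []).length) = L.getD m [] := by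
  induction L with
  | nil => simp
  | cons x t ih =>
    intro m hm
    cases m with
    | zero => simp [List.take_left]
    | succ m =>
      rw [List.take_succ_cons, List.map_cons, List.sum_cons, List.flatten_cons,
        List.drop_length_add_append, List.getD_cons_succ]
      exact ih m (by simpa using hm)

lemma skew (l : List (List α × List α × Bool)) (hg : ∀ p ∈ l, Good p) :
    |(((l.map (fun p => p.1.length)).sum : ℕ) : ℤ) - (((l.map (fun p => p.2.1.length)).sum : ℕ) : ℤ)|
      ≤ (pcost l : ℤ) := by
  induction l with
  | nil => simp [pcost]
  | cons p t ih =>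
    have hp := hg p List.mem_cons_self
    have hih := ih (fun q hq => hg q (List.mem_cons_of_mem p hq))
    rw [abs_le] at hih
    rw [pcost_cons, List.map_cons, List.map_cons, List.sum_cons, List.sum_cons, abs_le]
    cases h : p.2.2 with
    | true =>
      have hab : p.1.length = p.2.1.length := by rw [hp.1 h]
      simp only [h, if_true]
      push_cast at hih ⊢
      omega
    | false =>
      obtain ⟨ha, hc⟩ := hp.2 h
      simp only [h, Bool.false_eq_true, if_false]
      push_cast at hih ⊢
      omega




lemma hb_le_one (l : List (List α × List α × Bool)) : hb l ≤ 1 := by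
  cases l with
  | nil => simp [hb]
  | cons p t => simp only [hb]; split <;> omega

lemma good_edit (u v : List α) (hu : u.length ≤ 1) (hv : v.length ≤ 1)
    (l : List (List α × List α × Bool)) (h3 : ∀ p ∈ l, Good p) :
    ∀ p ∈ (u, v, false) :: l, Good p := by
  intro p hp
  rcases List.mem_cons.mp hp with rfl | hp
  · exact ⟨by simp, fun _ => ⟨hu, hv⟩⟩
  · exact h3 p hp

lemma pcost_edit (u v : List α) (l : List (List α × List α × Bool)) :
    pcost ((u, v, false) :: l) = 1 + pcost l := by
  rw [pcost_cons]; simp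

lemma len_edit (u v : List α) (l : List (List α × List α × Bool))
    (h5 : l.length ≤ 2 * pcost l + hb l) :
    ((u, v, false) :: l).length ≤ 2 * pcost ((u, v, false) :: l) + hb ((u, v, false) :: l) := by
  have h6 := hb_le_one l
  rw [pcost_edit]
  simp only [List.length_cons, hb]
  simp
  omega

lemma core [DecidableEq α] : ∀ (n : ℕ) (A B : List α), A.length + B.length ≤ n →
    ∃ l : List (List α × List α × Bool),
      (l.map (·.1)).flatten = A ∧ (l.map (·.2.1)).flatten = B ∧
      (∀ p ∈ l, Good p) ∧ pcost l ≤ EDX A B ∧ l.length ≤ 2 * pcost l + hb l := by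
  intro n
  induction n with
  | zero =>
    intro A B hAB
    have hA : A = [] := by cases A <;> simp_all
    have hB : B = [] := by cases B <;> simp_all
    subst hA; subst hB
    exact ⟨[], by simp, by simp, by simp, by simp [pcost], by simp [pcost, hb]⟩
  | succ n ih =>
    intro A B hAB
    match A, B with
    | [], [] =>
      exact ⟨[], by simp, by simp, by simp, by simp [pcost], by simp [pcost, hb]⟩
    | [], b :: B' =>
      obtain ⟨l, h1, h2, h3, h4, h5⟩ := ih [] B' (by simp at hAB ⊢; omega)
      have hED : EDX [] (b :: B') = 1 + EDX [] B' := by simp [EDX, levenshtein, Levenshtein.defaultCost]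
      exact ⟨([], [b], false) :: l, by simpa using h1, by simpa using h2,
        good_edit _ _ (by simp) (by simp) l h3,
        by rw [pcost_edit, hED]; omega, len_edit _ _ l h5⟩
    | a :: A', [] =>
      obtain ⟨l, h1, h2, h3, h4, h5⟩ := ih A' [] (by simp at hAB ⊢; omega)
      have hED : EDX (a :: A') [] = 1 + EDX A' [] := by cases A' <;> simp [EDX, levenshtein, Levenshtein.defaultCost]
      exact ⟨([a], [], false) :: l, by simpa using h1, by simpa using h2,
        good_edit _ _ (by simp) (by simp) l h3,
        by rw [pcost_edit, hED]; omega, len_edit _ _ l h5⟩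
    | a :: A', b :: B' =>
      have hmin : EDX (a :: A') (b :: B') =
          min (1 + EDX A' (b :: B'))
            (min (1 + EDX (a :: A') B') ((if a = b then 0 else 1) + EDX A' B')) := by
        simp [EDX, levenshtein, Levenshtein.defaultCost]
      have hcases : EDX (a :: A') (b :: B') = 1 + EDX A' (b :: B') ∨
          EDX (a :: A') (b :: B') = 1 + EDX (a :: A') B' ∨
          EDX (a :: A') (b :: B') = (if a = b then 0 else 1) + EDX A' B' := by omega
      rcases hcases with hd | hd | hd
      · obtain ⟨l, h1, h2, h3, h4, h5⟩ := ih A' (b :: B') (by simp at hAB ⊢; omega)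
        exact ⟨([a], [], false) :: l, by simpa using h1, by simpa using h2,
          good_edit _ _ (by simp) (by simp) l h3,
          by rw [pcost_edit, hd]; omega, len_edit _ _ l h5⟩
      · obtain ⟨l, h1, h2, h3, h4, h5⟩ := ih (a :: A') B' (by simp at hAB ⊢; omega)
        exact ⟨([], [b], false) :: l, by simpa using h1, by simpa using h2,
          good_edit _ _ (by simp) (by simp) l h3,
          by rw [pcost_edit, hd]; omega, len_edit _ _ l h5⟩
      · obtain ⟨l, h1, h2, h3, h4, h5⟩ := ih A' B' (by simp at hAB ⊢; omega)
        by_cases hab : a = b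
        · subst hab
          rw [if_pos rfl] at hd
          rcases l with _ | ⟨⟨u, v, m⟩, t⟩
          · simp only [List.map_nil, List.flatten_nil] at h1 h2
            refine ⟨[([a], [a], true)], by simp [← h1], by simp [← h2], ?_, ?_, ?_⟩
            · intro p hp
              rcases List.mem_cons.mp hp with rfl | hp
              · exact ⟨fun _ => rfl, by simp⟩
              · simp at hp
            · simp [pcost]
            · simp [pcost, hb]
          · cases m
            · -- head unmatched: prepend fresh matched piece
              refine ⟨([a], [a], true) :: (u, v, false) :: t, ?_, ?_, ?_, ?_, ?_⟩
              · simpa using h1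
              · simpa using h2
              · intro p hp
                rcases List.mem_cons.mp hp with rfl | hp
                · exact ⟨fun _ => rfl, by simp⟩
                · exact h3 p hp
              · have e0 : pcost (([a], [a], true) :: (u, v, false) :: t) =
                    pcost ((u, v, false) :: t) := by rw [pcost_cons]; simp
                rw [e0, hd]
                omega
              · have e0 : pcost (([a], [a], true) :: (u, v, false) :: t) =
                    pcost ((u, v, false) :: t) := by rw [pcost_cons]; simp
                have e2 : hb ((u, v, false) :: t) = 0 := by simp [hb]
                have e3 : hb (([a], [a], true) :: (u, v, false) :: t) = 1 := by simp [hb]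
                rw [e2] at h5
                rw [e0, e3, List.length_cons]
                omega
            · -- head matched: merge
              refine ⟨(a :: u, a :: v, true) :: t, ?_, ?_, ?_, ?_, ?_⟩
              · simp only [List.map_cons, List.flatten_cons] at h1 ⊢
                simp [← h1]
              · simp only [List.map_cons, List.flatten_cons] at h2 ⊢
                simp [← h2]
              · intro p hp
                rcases List.mem_cons.mp hp with rfl | hp
                · have huv : u = v := (h3 _ List.mem_cons_self).1 rfl
                  exact ⟨fun _ => by simp [huv], by simp⟩
                · exact h3 p (List.mem_cons_of_mem _ hp)
              · have e1 : pcost ((a :: u, a :: v, true) :: t) = pcost ((u, v, true) :: t) := by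
                  rw [pcost_cons, pcost_cons]
                rw [e1]
                omega
              · have e1 : pcost ((a :: u, a :: v, true) :: t) = pcost ((u, v, true) :: t) := by
                  rw [pcost_cons, pcost_cons]
                have e2 : hb ((a :: u, a :: v, true) :: t) = hb ((u, v, true) :: t) := rfl
                rw [e1, e2]
                simpa using h5
        · rw [if_neg hab] at hd
          exact ⟨([a], [b], false) :: l, by simpa using h1, by simpa using h2,
            good_edit _ _ (by simp) (by simp) l h3,
            by rw [pcost_edit, hd]; omega, len_edit _ _ l h5⟩


lemma flatten_replicate_nil (r : ℕ) : (List.replicate r ([] : List α)).flatten = [] := by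
  induction r <;> simp [*]

end DecompAux

open DecompAux

/-- Structural decomposition lemma: if `ED(A,B) ≤ k` then `A` and `B` can each be
partitioned into `2k+1` contiguous intervals (given by their lengths `LA`, `LB`;
the `i`-th interval starts at the sum of the earlier lengths), together with a
partial monotone matching `π` such that unmatched intervals have length at most `1`,
and matched intervals carry equal substrings whose starting positions differ by at
most `k`. -/
theorem decomposition_lemma {α : Type*} [DecidableEq α] (k : ℕ) (A B : List α)
    (h : ED A B ≤ k) :
    ∃ (LA LB : Fin (2 * k + 1) → ℕ) (π : Fin (2 * k + 1) → Option (Fin (2 * k + 1))),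
      (∑ i, LA i) = A.length ∧ (∑ i, LB i) = B.length ∧
      -- the matching is monotone (order-preserving, hence injective)
      (∀ i i' j j', π i = some j → π i' = some j' → i < i' → j < j') ∧
      -- unmatched intervals of A have length at most 1
      (∀ i, π i = none → LA i ≤ 1) ∧
      -- unmatched intervals of B have length at most 1
      (∀ j, (∀ i, π i ≠ some j) → LB j ≤ 1) ∧
      -- matched intervals carry equal substrings, with starting positions within k
      (∀ i j, π i = some j →
        LA i = LB j ∧
        |(∑ t ∈ univ.filter (· < i), LA t : ℤ) - (∑ t ∈ univ.filter (· < j), LB t : ℤ)| ≤ k ∧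
        (A.drop (∑ t ∈ univ.filter (· < i), LA t)).take (LA i) =
          (B.drop (∑ t ∈ univ.filter (· < j), LB t)).take (LB j)) := by
  obtain ⟨l, h1, h2, h3, h4, h5⟩ := core (A.length + B.length) A B le_rfl
  have hk : pcost l ≤ k := le_trans h4 h
  have hll : l.length ≤ 2 * k + 1 := by have := hb_le_one l; omega
  set d0 : List α × List α × Bool := ([], [], true) with hd0
  set l' : List (List α × List α × Bool) := l ++ List.replicate (2 * k + 1 - l.length) d0
    with hl'
  have hlen : l'.length = 2 * k + 1 := by
    rw [hl', List.length_append, List.length_replicate]; omega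
  have hG : ∀ p ∈ l', Good p := by
    intro p hp
    rcases List.mem_append.mp hp with hp | hp
    · exact h3 p hp
    · have hpd : p = d0 := List.eq_of_mem_replicate hp
      subst hpd
      exact ⟨fun _ => rfl, fun hf => by simp [hd0] at hf⟩
  have hA : (l'.map (·.1)).flatten = A := by
    rw [hl', List.map_append, List.flatten_append, List.map_replicate]
    simp [hd0, flatten_replicate_nil, h1]
  have hB : (l'.map (·.2.1)).flatten = B := by
    rw [hl', List.map_append, List.flatten_append, List.map_replicate]
    simp [hd0, flatten_replicate_nil, h2]
  have hc' : pcost l' = pcost l := by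
    rw [hl', pcost, List.filter_append]
    have : (List.replicate (2 * k + 1 - l.length) d0).filter (fun p => !p.2.2) = [] := by
      apply List.filter_eq_nil_iff.mpr
      intro p hp
      rw [List.eq_of_mem_replicate hp, hd0]
      simp
    rw [this, List.append_nil, pcost]
  have hck : pcost l' ≤ k := by omega
  refine ⟨fun i => (l'.getD i d0).1.length, fun i => (l'.getD i d0).2.1.length,
    fun i => if (l'.getD i d0).2.2 then some i else none, ?_, ?_, ?_, ?_, ?_, ?_⟩
  · rw [sum_univ_getD (fun p => p.1.length) d0 l' _ hlen, ← hA, List.length_flatten,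
      List.map_map]
    rfl
  · rw [sum_univ_getD (fun p => p.2.1.length) d0 l' _ hlen, ← hB, List.length_flatten,
      List.map_map]
    rfl
  · intro i i' j j' hj hj' hlt
    beta_reduce at hj hj'
    have e1 : j = i := by
      split at hj
      · exact (Option.some.inj hj).symm
      · cases hj
    have e2 : j' = i' := by
      split at hj'
      · exact (Option.some.inj hj').symm
      · cases hj'
    rw [e1, e2]; exact hlt
  · intro i hi
    beta_reduce at hi
    by_cases hc : (l'.getD i d0).2.2
    · rw [if_pos hc] at hi; cases hi
    · have hmem : l'.getD i d0 ∈ l' := by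
        rw [List.getD_eq_getElem (hn := by rw [hlen]; exact i.isLt)]
        exact List.getElem_mem _
      exact ((hG _ hmem).2 (by simpa using hc)).1
  · intro j hj
    by_cases hc : (l'.getD j d0).2.2
    · exact absurd (if_pos hc) (hj j)
    · have hmem : l'.getD j d0 ∈ l' := by
        rw [List.getD_eq_getElem (hn := by rw [hlen]; exact j.isLt)]
        exact List.getElem_mem _
      exact ((hG _ hmem).2 (by simpa using hc)).2
  · intro i j hj
    beta_reduce at hj
    by_cases hc : (l'.getD i d0).2.2
    swap
    · rw [if_neg hc] at hj; cases hj
    have hji : j = i := by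
      rw [if_pos hc] at hj; exact (Option.some.inj hj).symm
    subst hji
    have hmem : l'.getD j d0 ∈ l' := by
      rw [List.getD_eq_getElem (hn := by rw [hlen]; exact j.isLt)]
      exact List.getElem_mem _
    have huv : (l'.getD j d0).1 = (l'.getD j d0).2.1 := (hG _ hmem).1 hc
    have hs1 := sum_filter_lt_getD (fun p => p.1.length) d0 l' _ hlen j
    have hs2 := sum_filter_lt_getD (fun p => p.2.1.length) d0 l' _ hlen j
    refine ⟨by simp only [huv], ?_, ?_⟩
    · beta_reduce
      have key := skew (l'.take j) (fun p hp => hG p (List.take_subset _ _ hp))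
      have hple : pcost (l'.take j) ≤ pcost l' :=
        List.Sublist.length_le (List.Sublist.filter _ (List.take_sublist _ _))
      rw [← Nat.cast_sum, ← Nat.cast_sum, hs1, hs2]
      refine le_trans key ?_
      exact_mod_cast le_trans hple hck
    · beta_reduce
      rw [hs1, hs2]
      have hjl : (j : ℕ) < l'.length := by rw [hlen]; exact j.isLt
      have EA : ((l'.map (·.1)).flatten.drop
            ((((l'.map (·.1)).take j).map List.length).sum)).take
            (((l'.map (·.1)).getD j []).length) = (l'.map (·.1)).getD j [] :=
        flatten_extract _ j (by simpa using hjl)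
      have EB : ((l'.map (·.2.1)).flatten.drop
            ((((l'.map (·.2.1)).take j).map List.length).sum)).take
            (((l'.map (·.2.1)).getD j []).length) = (l'.map (·.2.1)).getD j [] :=
        flatten_extract _ j (by simpa using hjl)
      have eL1 : (l'.map (·.1)).getD j [] = (l'.getD j d0).1 := by
        rw [List.getD_eq_getElem (hn := by simpa using hjl),
          List.getD_eq_getElem (hn := hjl), List.getElem_map]
      have eL2 : (l'.map (·.2.1)).getD j [] = (l'.getD j d0).2.1 := by
        rw [List.getD_eq_getElem (hn := by simpa using hjl),
          List.getD_eq_getElem (hn := hjl), List.getElem_map]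
      have eS1 : (((l'.map (·.1)).take j).map List.length).sum =
          ((l'.take j).map (fun p => p.1.length)).sum := by
        simp [List.map_take, List.map_map, Function.comp_def]
      have eS2 : (((l'.map (·.2.1)).take j).map List.length).sum =
          ((l'.take j).map (fun p => p.2.1.length)).sum := by
        simp [List.map_take, List.map_map, Function.comp_def]
      rw [hA, eL1, eS1] at EA
      rw [hB, eL2, eS2] at EB
      rw [EA, EB]
      exact huv
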